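/- Let n ≥ 2 be an integer, let m = ⌊n/2⌋, and let k be an integer with m < k ≤ n such that k − m divides m. Then there exists a (k, n, n)-fractionally balanced tripartite hypergraph whose matching number is at most ⌈n/2⌉. -/

import Mathlib

namespace BMAux

/-- sum over `Fin N` of an indicator of value `j`. -/
lemma sum_fin_val {N : ℕ} (j w : ℕ) :
    ∑ x : Fin N, (if (x : ℕ) = j then w else 0) = if j < N then w else 0 := by
  split
  · next h =>
    rw [Finset.sum_eq_single (⟨j, h⟩ : Fin N)]
    · simp
    · intro b _ hb; exact if_neg (fun hv => hb (Fin.ext hv))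
    · simp
  · next h =>
    apply Finset.sum_eq_zero
    intro x _
    have := x.2
    exact if_neg (by omega)

/-- Euclidean uniqueness as an iff. -/
lemma euc_iff {D : ℕ} (c a v : ℕ) (ha : a < D) :
    c * D + a = v ↔ (a = v % D ∧ c = v / D) := by
  constructor
  · rintro rfl
    constructor
    · rw [Nat.add_comm, Nat.add_mul_mod_self_right, Nat.mod_eq_of_lt ha]
    · rw [Nat.add_comm, Nat.add_mul_div_right _ _ (by omega : 0 < D), Nat.div_eq_of_lt ha]
      omega
  · rintro ⟨rfl, rfl⟩
    exact Nat.div_add_mod' v D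

lemma sum_c {N D : ℕ} (w a v : ℕ) (ha : a < D) :
    ∑ c : Fin N, (if (c : ℕ) * D + a = v then w else 0)
      = if (a = v % D ∧ v / D < N) then w else 0 := by
  have key : ∀ c : ℕ, (c * D + a = v) ↔ (a = v % D ∧ c = v / D) := fun c => euc_iff c a v ha
  calc ∑ c : Fin N, (if (c : ℕ) * D + a = v then w else 0)
      = ∑ c : Fin N, (if a = v % D then (if (c : ℕ) = v / D then w else 0) else 0) := by
        apply Finset.sum_congr rfl
        intro c _
        rw [if_congr (key c) rfl rfl, ite_and]
    _ = if a = v % D then ∑ c : Fin N, (if (c : ℕ) = v / D then w else 0) else 0 := by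
        split <;> simp
    _ = _ := by
        rw [sum_fin_val]
        by_cases h1 : a = v % D <;> by_cases h2 : v / D < N <;> simp [h1, h2]


/-- double indicator sum: `c*(D) + i` ranging. -/
lemma sum_ci {N D' : ℕ} (D w v : ℕ) (hD : D' ≤ D) :
    ∑ c : Fin N, ∑ i : Fin D', (if (c : ℕ) * D + (i : ℕ) = v then w else 0)
      = if (v % D < D' ∧ v / D < N) then w else 0 := by
  rw [Finset.sum_comm]
  have : ∀ i : Fin D', ∑ c : Fin N, (if (c : ℕ) * D + (i : ℕ) = v then w else 0)
      = if ((i : ℕ) = v % D ∧ v / D < N) then w else 0 := by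
    intro i; exact sum_c w i v (lt_of_lt_of_le i.2 hD)
  rw [Finset.sum_congr rfl (fun i _ => this i)]
  calc ∑ i : Fin D', (if ((i : ℕ) = v % D ∧ v / D < N) then w else 0)
      = ∑ i : Fin D', (if (v / D < N) then (if (i : ℕ) = v % D then w else 0) else 0) := by
        apply Finset.sum_congr rfl; intro i _
        by_cases h1 : (i : ℕ) = v % D <;> by_cases h2 : v / D < N <;> simp [h1, h2]
    _ = if (v / D < N) then ∑ i : Fin D', (if (i : ℕ) = v % D then w else 0) else 0 := by
        split <;> simp
    _ = _ := by
      rw [sum_fin_val]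
      by_cases h1 : v % D < D' <;> by_cases h2 : v / D < N <;> simp [h1, h2]

section Construction

variable (n k u d : ℕ)

abbrev Idx := (Fin u × Fin d × Fin 2 × Fin 2) ⊕ Fin u

def xval : Idx u d → ℕ
  | .inl (c, i, s, _) => (c : ℕ) * (d + 1) + (if (s : ℕ) = 0 then (i : ℕ) else d)
  | .inr c => (c : ℕ) * (d + 1) + d

def yval : Idx u d → ℕ
  | .inl (c, i, _, t) => 2 * ((c : ℕ) * d + (i : ℕ)) + (t : ℕ)
  | .inr _ => n - 1

def zval : Idx u d → ℕ
  | .inl (c, i, s, t) => 2 * ((c : ℕ) * d + (i : ℕ)) + ((t : ℕ) + (s : ℕ)) % 2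

  | .inr _ => n - 1

def wt : Idx u d → ℕ
  | .inl (_, _, s, _) => if (s : ℕ) = 0 then n * u else u * (2 * k - n)
  | .inr _ => (n - 2 * (n / 2)) * (2 * k)

variable {n k u d}

lemma xval_lt (hk : k = u * (d + 1)) (p : Idx u d) : xval u d p < k := by
  have e1 : ∀ c : ℕ, c + 1 ≤ u → (c + 1) * (d + 1) ≤ u * (d + 1) :=
    fun c h => Nat.mul_le_mul_right _ h
  rcases p with ⟨c, i, s, t⟩ | c
  · have h1 := e1 c c.2
    have h2 : ((c : ℕ) + 1) * (d + 1) = (c : ℕ) * (d + 1) + (d + 1) := by ring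
    have h3 : (if (s : ℕ) = 0 then (i : ℕ) else d) ≤ d := by
      split
      · exact le_of_lt i.2
      · exact le_rfl
    show (c : ℕ) * (d + 1) + (if (s : ℕ) = 0 then (i : ℕ) else d) < k
    omega
  · have h1 := e1 c c.2
    have h2 : ((c : ℕ) + 1) * (d + 1) = (c : ℕ) * (d + 1) + (d + 1) := by ring
    show (c : ℕ) * (d + 1) + d < k
    omega

lemma blk_lt (c : Fin u) (i : Fin d) : (c : ℕ) * d + (i : ℕ) < u * d := by
  have h1 : ((c : ℕ) + 1) * d ≤ u * d := Nat.mul_le_mul_right _ c.2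
  have h2 : ((c : ℕ) + 1) * d = (c : ℕ) * d + d := by ring
  have := i.2
  omega

lemma yval_lt (hm : u * d = n / 2) (h2 : 2 ≤ n) (p : Idx u d) : yval n u d p < n := by
  rcases p with ⟨c, i, s, t⟩ | c
  · have := blk_lt c i
    have := t.2
    show 2 * ((c : ℕ) * d + (i : ℕ)) + (t : ℕ) < n
    omega
  · show n - 1 < n; omega

lemma zval_lt (hm : u * d = n / 2) (h2 : 2 ≤ n) (p : Idx u d) : zval n u d p < n := by
  rcases p with ⟨c, i, s, t⟩ | c
  · have := blk_lt c i
    have h3 : ((t : ℕ) + (s : ℕ)) % 2 < 2 := Nat.mod_lt _ (by omega)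
    show 2 * ((c : ℕ) * d + (i : ℕ)) + ((t : ℕ) + (s : ℕ)) % 2 < n
    omega
  · show n - 1 < n; omega


/-- blocked indicator double sum. -/
lemma sum_blk {N D' : ℕ} (w τ v : ℕ) (hD' : 1 ≤ D') (hτ : τ < 2) :
    ∑ c : Fin N, ∑ i : Fin D', (if 2 * ((c : ℕ) * D' + (i : ℕ)) + τ = v then w else 0)
      = if (τ = v % 2 ∧ v / 2 < N * D') then w else 0 := by
  have key : ∀ X : ℕ, (2 * X + τ = v) ↔ (τ = v % 2 ∧ X = v / 2) := by
    intro X; omega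
  calc ∑ c : Fin N, ∑ i : Fin D', (if 2 * ((c : ℕ) * D' + (i : ℕ)) + τ = v then w else 0)
      = ∑ c : Fin N, ∑ i : Fin D',
          (if τ = v % 2 then (if (c : ℕ) * D' + (i : ℕ) = v / 2 then w else 0) else 0) := by
        apply Finset.sum_congr rfl; intro c _; apply Finset.sum_congr rfl; intro i _
        rw [if_congr (key _) rfl rfl, ite_and]
    _ = if τ = v % 2 then
          ∑ c : Fin N, ∑ i : Fin D', (if (c : ℕ) * D' + (i : ℕ) = v / 2 then w else 0) else 0 := by
        split <;> simp
    _ = _ := by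
        rw [sum_ci (hD := le_refl D')]
        have h1 : v / 2 % D' < D' := Nat.mod_lt _ (by omega)
        have h2 : v / 2 / D' < N ↔ v / 2 < N * D' := Nat.div_lt_iff_lt_mul (by omega)
        by_cases c1 : τ = v % 2 <;> by_cases c2 : v / 2 < N * D' <;>
          simp [c1, c2, h1, h2.mpr, h2]

variable {n k u d : ℕ}

def phi (hm : u * d = n / 2) (hk : k = u * (d + 1)) (h2 : 2 ≤ n) (p : Idx u d) :
    Fin k × Fin n × Fin n :=
  (⟨xval u d p, xval_lt hk p⟩, ⟨yval n u d p, yval_lt hm h2 p⟩, ⟨zval n u d p, zval_lt hm h2 p⟩)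

lemma phi_x {hm : u * d = n / 2} {hk : k = u * (d + 1)} {h2 : 2 ≤ n} (p : Idx u d) :
    ((phi hm hk h2 p).1 : ℕ) = xval u d p := rfl
lemma phi_y {hm : u * d = n / 2} {hk : k = u * (d + 1)} {h2 : 2 ≤ n} (p : Idx u d) :
    ((phi hm hk h2 p).2.1 : ℕ) = yval n u d p := rfl
lemma phi_z {hm : u * d = n / 2} {hk : k = u * (d + 1)} {h2 : 2 ≤ n} (p : Idx u d) :
    ((phi hm hk h2 p).2.2 : ℕ) = zval n u d p := rfl

lemma swap_marg {α β : Type*} [Fintype α] [Fintype β] [DecidableEq β]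
    (Φ : α → β) (w : α → ℕ) (P : β → Prop) [DecidablePred P] :
    ∑ b : β, (if P b then (∑ a : α, if Φ a = b then w a else 0) else 0)
      = ∑ a : α, (if P (Φ a) then w a else 0) := by
  have step1 : ∀ b, (if P b then (∑ a : α, if Φ a = b then w a else 0) else 0)
      = ∑ a : α, (if Φ a = b then (if P b then w a else 0) else 0) := by
    intro b; split <;> simp
  rw [Finset.sum_congr rfl (fun b _ => step1 b), Finset.sum_comm]
  apply Finset.sum_congr rfl
  intro a _
  rw [Finset.sum_ite_eq]
  simp

/-- the weight function on edges -/
def Ffun (hm : u * d = n / 2) (hk : k = u * (d + 1)) (h2 : 2 ≤ n) :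
    (Fin k × Fin n × Fin n) → ℕ := fun e =>
  ∑ p : Idx u d, if phi hm hk h2 p = e then wt n k u d p else 0

section Evals

variable (hm : u * d = n / 2) (hk : k = u * (d + 1)) (hd : 1 ≤ d) (hu : 1 ≤ u) (h2 : 2 ≤ n)
set_option linter.unusedSectionVars false
include hm hk hd hu h2

lemma keyx : d * (u * (2 * k - n)) + d * (u * (2 * k - n)) + (n - 2 * (n / 2)) * (2 * k)
    = 2 * n * u := by
  have e1 : u * (d + 1) = u * d + u := by ring
  have hcase : n = 2 * (u * d) ∨ n = 2 * (u * d) + 1 := by omega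
  rcases hcase with hc | hc
  · have h2k : 2 * k - n = 2 * u := by omega
    have h0 : n - 2 * (n / 2) = 0 := by omega
    rw [h2k, h0, hc]; ring
  · obtain ⟨u', rfl⟩ : ∃ u', u = u' + 1 := ⟨u - 1, by omega⟩
    have h2k : 2 * k - n = 2 * u' + 1 := by omega
    have h0 : n - 2 * (n / 2) = 1 := by omega
    rw [h2k, h0, show n = 2 * ((u' + 1) * d) + 1 by omega,
      show k = (u' + 1) * d + (u' + 1) by omega]
    ring

lemma keyy : n * u + u * (2 * k - n) = 2 * k * u := by
  have e1 : u * (d + 1) = u * d + u := by ring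
  have h2k : n + (2 * k - n) = 2 * k := by omega
  calc n * u + u * (2 * k - n) = u * (n + (2 * k - n)) := by ring
    _ = u * (2 * k) := by rw [h2k]
    _ = 2 * k * u := by ring

lemma xmarg (v : Fin k) :
    ∑ p : Idx u d, (if xval u d p = (v : ℕ) then wt n k u d p else 0) = 2 * n * u := by
  rw [Fintype.sum_sum_type]
  have hA : ∀ w : ℕ, ∑ c : Fin u, ∑ i : Fin d,
      (if (c : ℕ) * (d + 1) + (i : ℕ) = (v : ℕ) then w else 0)
      = if ((v : ℕ) % (d + 1) < d ∧ (v : ℕ) / (d + 1) < u) then w else 0 :=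
    fun w => sum_ci (D := d + 1) w (v : ℕ) (by omega)
  have hB : ∀ w : ℕ, ∑ c : Fin u, (if (c : ℕ) * (d + 1) + d = (v : ℕ) then w else 0)
      = if (d = (v : ℕ) % (d + 1) ∧ (v : ℕ) / (d + 1) < u) then w else 0 :=
    fun w => sum_c w d (v : ℕ) (by omega)
  have hvu : (v : ℕ) / (d + 1) < u := by
    rw [Nat.div_lt_iff_lt_mul (by omega)]
    have := v.2
    omega
  have hmod : (v : ℕ) % (d + 1) < d + 1 := Nat.mod_lt _ (by omega)
  have hkey := keyx hm hk hd hu h2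
  have hB2 : ∀ w : ℕ, ∑ c : Fin u, ∑ _i : Fin d,
      (if (c : ℕ) * (d + 1) + d = (v : ℕ) then w else 0)
      = if (d = (v : ℕ) % (d + 1) ∧ (v : ℕ) / (d + 1) < u) then d * w else 0 := by
    intro w
    have h1 : ∀ c : Fin u, ∑ _i : Fin d, (if (c : ℕ) * (d + 1) + d = (v : ℕ) then w else 0)
        = (if (c : ℕ) * (d + 1) + d = (v : ℕ) then d * w else 0) := by
      intro c
      rw [Finset.sum_const, Finset.card_univ, Fintype.card_fin, smul_eq_mul]
      split <;> ring
    rw [Finset.sum_congr rfl (fun c _ => h1 c), sum_c (d * w) d _ (by omega)]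
  simp only [Fintype.sum_prod_type, Fin.sum_univ_two, xval, wt, Fin.val_zero, Fin.val_one,
    if_true, if_neg (by omega : ¬(1 : ℕ) = 0)]
  have hpp : n * u + n * u = 2 * n * u := by ring
  simp only [Finset.sum_add_distrib, hA, hB, hB2]
  erw [hB]
  split_ifs <;> omega

lemma ymarg (v : Fin n) :
    ∑ p : Idx u d, (if yval n u d p = (v : ℕ) then wt n k u d p else 0) = 2 * k * u := by
  rw [Fintype.sum_sum_type]
  have hA : ∀ (w τ : ℕ), τ < 2 → ∑ c : Fin u, ∑ i : Fin d,
      (if 2 * ((c : ℕ) * d + (i : ℕ)) + τ = (v : ℕ) then w else 0)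
      = if (τ = (v : ℕ) % 2 ∧ (v : ℕ) / 2 < u * d) then w else 0 :=
    fun w τ hτ => sum_blk w τ (v : ℕ) hd hτ
  have hE : ∑ c : Fin u, (if n - 1 = (v : ℕ) then (n - 2 * (n / 2)) * (2 * k) else 0)
      = if n - 1 = (v : ℕ) then u * ((n - 2 * (n / 2)) * (2 * k)) else 0 := by
    rw [Finset.sum_const, Finset.card_univ, Fintype.card_fin, smul_eq_mul]
    split <;> ring
  have hkey := keyy hm hk hd hu h2
  have hv2 := v.2
  have e1 : u * (d + 1) = u * d + u := by ring
  simp only [Fintype.sum_prod_type, Fin.sum_univ_two, yval, wt, Fin.val_zero, Fin.val_one,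
    if_true, if_neg (by omega : ¬(1 : ℕ) = 0)]
  simp only [Finset.sum_add_distrib, hA _ 0 (by omega), hA _ 1 (by omega), hE]
  erw [hE]
  by_cases hpar : n = 2 * (n / 2)
  · rw [show n - 2 * (n / 2) = 0 by omega]
    have ez : u * (0 * (2 * k)) = 0 := by ring
    split_ifs <;> omega
  · have hodd : n - 2 * (n / 2) = 1 := by omega
    rw [hodd]
    have ez : u * (1 * (2 * k)) = 2 * k * u := by ring
    split_ifs <;> omega

lemma zmarg (v : Fin n) :
    ∑ p : Idx u d, (if zval n u d p = (v : ℕ) then wt n k u d p else 0) = 2 * k * u := by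
  rw [Fintype.sum_sum_type]
  have hA : ∀ (w τ : ℕ), τ < 2 → ∑ c : Fin u, ∑ i : Fin d,
      (if 2 * ((c : ℕ) * d + (i : ℕ)) + τ = (v : ℕ) then w else 0)
      = if (τ = (v : ℕ) % 2 ∧ (v : ℕ) / 2 < u * d) then w else 0 :=
    fun w τ hτ => sum_blk w τ (v : ℕ) hd hτ
  have hE : ∑ c : Fin u, (if n - 1 = (v : ℕ) then (n - 2 * (n / 2)) * (2 * k) else 0)
      = if n - 1 = (v : ℕ) then u * ((n - 2 * (n / 2)) * (2 * k)) else 0 := by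
    rw [Finset.sum_const, Finset.card_univ, Fintype.card_fin, smul_eq_mul]
    split <;> ring
  have hkey := keyy hm hk hd hu h2
  have hv2 := v.2
  have e1 : u * (d + 1) = u * d + u := by ring
  simp only [Fintype.sum_prod_type, Fin.sum_univ_two, zval, wt, Fin.val_zero, Fin.val_one,
    if_true, if_neg (by omega : ¬(1 : ℕ) = 0)]
  simp only [show ((0 : ℕ) + 0) % 2 = 0 by norm_num, show ((1 : ℕ) + 0) % 2 = 1 by norm_num,
    show ((0 : ℕ) + 1) % 2 = 1 by norm_num, show ((1 : ℕ) + 1) % 2 = 0 by norm_num]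
  simp only [Finset.sum_add_distrib, hA _ 0 (by omega), hA _ 1 (by omega), hE]
  erw [hE]
  by_cases hpar : n = 2 * (n / 2)
  · rw [show n - 2 * (n / 2) = 0 by omega]
    have ez : u * (0 * (2 * k)) = 0 := by ring
    split_ifs <;> omega
  · have hodd : n - 2 * (n / 2) = 1 := by omega
    rw [hodd]
    have ez : u * (1 * (2 * k)) = 2 * k * u := by ring
    split_ifs <;> omega

lemma F_marg1 (v : Fin k) :
    ∑ e : Fin k × Fin n × Fin n, (if e.1 = v then Ffun hm hk h2 e else 0) = 2 * n * u := by
  unfold Ffun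
  rw [swap_marg (phi hm hk h2) (wt n k u d) (fun e => e.1 = v)]
  have hc : ∀ p : Idx u d, ((phi hm hk h2 p).1 = v) ↔ (xval u d p = (v : ℕ)) := by
    intro p; rw [Fin.ext_iff, phi_x]
  rw [Finset.sum_congr rfl (fun p _ => if_congr (hc p) rfl rfl)]
  exact xmarg hm hk hd hu h2 v

lemma F_marg2 (v : Fin n) :
    ∑ e : Fin k × Fin n × Fin n, (if e.2.1 = v then Ffun hm hk h2 e else 0) = 2 * k * u := by
  unfold Ffun
  rw [swap_marg (phi hm hk h2) (wt n k u d) (fun e => e.2.1 = v)]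
  have hc : ∀ p : Idx u d, ((phi hm hk h2 p).2.1 = v) ↔ (yval n u d p = (v : ℕ)) := by
    intro p; rw [Fin.ext_iff, phi_y]
  rw [Finset.sum_congr rfl (fun p _ => if_congr (hc p) rfl rfl)]
  exact ymarg hm hk hd hu h2 v

lemma F_marg3 (v : Fin n) :
    ∑ e : Fin k × Fin n × Fin n, (if e.2.2 = v then Ffun hm hk h2 e else 0) = 2 * k * u := by
  unfold Ffun
  rw [swap_marg (phi hm hk h2) (wt n k u d) (fun e => e.2.2 = v)]
  have hc : ∀ p : Idx u d, ((phi hm hk h2 p).2.2 = v) ↔ (zval n u d p = (v : ℕ)) := by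
    intro p; rw [Fin.ext_iff, phi_z]
  rw [Finset.sum_congr rfl (fun p _ => if_congr (hc p) rfl rfl)]
  exact zmarg hm hk hd hu h2 v

end Evals

end Construction

end BMAux



/-- `f` is a balanced weight function on the tripartite hypergraph `H`:
nonnegative, vanishing outside `H`, with constant degrees on each of the three sides. -/
def TriBalanced {a b c : ℕ} (H : Finset (Fin a × Fin b × Fin c))
    (f : Fin a × Fin b × Fin c → ℝ) : Prop :=
  (∀ e, 0 ≤ f e) ∧ (∀ e, e ∉ H → f e = 0) ∧
    (∀ v w : Fin a, (∑ e : Fin a × Fin b × Fin c, if e.1 = v then f e else 0) =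
      ∑ e : Fin a × Fin b × Fin c, if e.1 = w then f e else 0) ∧
    (∀ v w : Fin b, (∑ e : Fin a × Fin b × Fin c, if e.2.1 = v then f e else 0) =
      ∑ e : Fin a × Fin b × Fin c, if e.2.1 = w then f e else 0) ∧
    (∀ v w : Fin c, (∑ e : Fin a × Fin b × Fin c, if e.2.2 = v then f e else 0) =
      ∑ e : Fin a × Fin b × Fin c, if e.2.2 = w then f e else 0)

/-- `H` is an `(a,b,c)`-fractionally balanced tripartite hypergraph. -/
def TriFracBalanced {a b c : ℕ} (H : Finset (Fin a × Fin b × Fin c)) : Prop :=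
  ∃ f, TriBalanced H f ∧ f ≠ 0

/-- `M` is a matching in `H`: a set of edges of `H` any two distinct members of
which differ in all three coordinates. -/
def TriMatching {a b c : ℕ} (H M : Finset (Fin a × Fin b × Fin c)) : Prop :=
  M ⊆ H ∧ ∀ e ∈ M, ∀ f ∈ M, e ≠ f → e.1 ≠ f.1 ∧ e.2.1 ≠ f.2.1 ∧ e.2.2 ≠ f.2.2

open BMAux in
/-- For `n ≥ 2` and `⌊n/2⌋ < k ≤ n` with `k - ⌊n/2⌋` dividing `⌊n/2⌋`, there is a
`(k,n,n)`-fractionally balanced tripartite hypergraph with matching number at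
most `⌈n/2⌉`. -/
theorem bm_upper_k_n_n_div (n k : ℕ) (hn : 2 ≤ n)
    (hmk : n / 2 < k) (hkn : k ≤ n) (hdvd : (k - n / 2) ∣ (n / 2)) :
    ∃ H : Finset (Fin k × Fin n × Fin n), TriFracBalanced H ∧
      ∀ M, TriMatching H M → M.card ≤ (n + 1) / 2 := by
  classical
  set u := k - n / 2 with hu_def
  have hu : 1 ≤ u := by omega
  have hum : u ≤ n / 2 := by
    by_contra h
    have h0 : n / 2 = 0 := Nat.eq_zero_of_dvd_of_lt hdvd (by omega)
    omega
  set d := (n / 2) / u with hd_def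
  have hm : u * d = n / 2 := Nat.mul_div_cancel' hdvd
  have hd : 1 ≤ d := (Nat.one_le_div_iff (by omega)).mpr hum
  have hk : k = u * (d + 1) := by
    have e1 : u * (d + 1) = u * d + u := by ring
    omega
  have h2 : 2 ≤ n := hn
  set F : Fin k × Fin n × Fin n → ℕ := Ffun hm hk h2 with hF
  refine ⟨Finset.univ.filter (fun e => F e ≠ 0), ⟨fun e => (F e : ℝ), ⟨?_, ?_, ?_, ?_, ?_⟩, ?_⟩, ?_⟩
  · intro e; exact Nat.cast_nonneg _
  · intro e he
    simp only [Finset.mem_filter, Finset.mem_univ, true_and, not_not] at he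
    show ((F e : ℕ) : ℝ) = 0
    rw [he, Nat.cast_zero]
  · -- first marginal
    have cast_eq : ∀ v : Fin k,
        (∑ e : Fin k × Fin n × Fin n, if e.1 = v then ((F e : ℕ) : ℝ) else 0)
          = ((2 * n * u : ℕ) : ℝ) := by
      intro v
      have h1 : ∀ e : Fin k × Fin n × Fin n,
          (if e.1 = v then ((F e : ℕ) : ℝ) else 0) = (((if e.1 = v then F e else 0 : ℕ)) : ℝ) :=
        fun e => by split <;> simp
      rw [Finset.sum_congr rfl (fun e _ => h1 e), ← Nat.cast_sum, hF,
        F_marg1 hm hk hd hu h2 v]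
    intro v w; rw [cast_eq v, cast_eq w]
  · have cast_eq : ∀ v : Fin n,
        (∑ e : Fin k × Fin n × Fin n, if e.2.1 = v then ((F e : ℕ) : ℝ) else 0)
          = ((2 * k * u : ℕ) : ℝ) := by
      intro v
      have h1 : ∀ e : Fin k × Fin n × Fin n,
          (if e.2.1 = v then ((F e : ℕ) : ℝ) else 0) = (((if e.2.1 = v then F e else 0 : ℕ)) : ℝ) :=
        fun e => by split <;> simp
      rw [Finset.sum_congr rfl (fun e _ => h1 e), ← Nat.cast_sum, hF,
        F_marg2 hm hk hd hu h2 v]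
    intro v w; rw [cast_eq v, cast_eq w]
  · have cast_eq : ∀ v : Fin n,
        (∑ e : Fin k × Fin n × Fin n, if e.2.2 = v then ((F e : ℕ) : ℝ) else 0)
          = ((2 * k * u : ℕ) : ℝ) := by
      intro v
      have h1 : ∀ e : Fin k × Fin n × Fin n,
          (if e.2.2 = v then ((F e : ℕ) : ℝ) else 0) = (((if e.2.2 = v then F e else 0 : ℕ)) : ℝ) :=
        fun e => by split <;> simp
      rw [Finset.sum_congr rfl (fun e _ => h1 e), ← Nat.cast_sum, hF,
        F_marg3 hm hk hd hu h2 v]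
    intro v w; rw [cast_eq v, cast_eq w]
  · -- f ≠ 0
    intro hzero
    set p0 : Idx u d := Sum.inl (⟨0, hu⟩, ⟨0, hd⟩, 0, 0) with hp0
    have h1 : wt n k u d p0 ≤ F (phi hm hk h2 p0) := by
      rw [hF]
      unfold Ffun
      have := Finset.single_le_sum
        (f := fun p => if phi hm hk h2 p = phi hm hk h2 p0 then wt n k u d p else 0)
        (fun i _ => Nat.zero_le _) (Finset.mem_univ p0)
      simpa using this
    have h2' : wt n k u d p0 = n * u := rfl
    have h3 := congrFun hzero (phi hm hk h2 p0)
    simp only [Pi.zero_apply, Nat.cast_eq_zero] at h3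
    have h4 : 0 < n * u := Nat.mul_pos (by omega) (by omega)
    omega
  · -- matching bound
    rintro M ⟨hsub, hdiff⟩
    have hwit : ∀ e ∈ M, ∃ p, phi hm hk h2 p = e ∧ wt n k u d p ≠ 0 := by
      intro e he
      have heH := hsub he
      simp only [Finset.mem_filter, Finset.mem_univ, true_and] at heH
      rw [hF] at heH
      unfold Ffun at heH
      obtain ⟨p, -, hp⟩ := Finset.exists_ne_zero_of_sum_ne_zero heH
      by_cases hpe : phi hm hk h2 p = e
      · refine ⟨p, hpe, ?_⟩
        rw [if_pos hpe] at hp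
        exact hp
      · rw [if_neg hpe] at hp
        exact absurd rfl hp
    set gm : Fin k × Fin n × Fin n → ℕ :=
      fun e => if (e.2.1 : ℕ) < 2 * (n / 2) then (e.2.1 : ℕ) / 2 else n / 2 with hgm
    have hval : ∀ e ∈ M, gm e < n / 2 + (n - 2 * (n / 2)) := by
      intro e he
      obtain ⟨p, rfl, hw⟩ := hwit e he
      rcases p with ⟨c, i, s, t⟩ | c
      · have h1 : ((phi hm hk h2 (Sum.inl (c, i, s, t))).2.1 : ℕ)
            = 2 * ((c : ℕ) * d + (i : ℕ)) + (t : ℕ) := rfl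
        have h3 := blk_lt c i
        have h2t := t.2
        simp only [hgm]
        rw [h1, if_pos (by omega)]
        omega
      · have h1 : ((phi hm hk h2 (Sum.inr c)).2.1 : ℕ) = n - 1 := rfl
        have hw2 : (n - 2 * (n / 2)) * (2 * k) ≠ 0 := hw
        have hz0 : n - 2 * (n / 2) ≠ 0 := fun h0 => hw2 (by rw [h0]; ring)
        have hodd : n - 2 * (n / 2) = 1 := by omega
        simp only [hgm]
        rw [h1, if_neg (by omega)]
        omega
    have hinj : Set.InjOn gm ↑M := by
      intro e he e' he' hge
      by_contra hne
      obtain ⟨hx, hy, hz⟩ := hdiff e (Finset.mem_coe.mp he) e' (Finset.mem_coe.mp he') hne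
      obtain ⟨p, rfl, hw⟩ := hwit e (Finset.mem_coe.mp he)
      obtain ⟨p', rfl, hw'⟩ := hwit e' (Finset.mem_coe.mp he')
      rcases p with ⟨c, i, s, t⟩ | c <;> rcases p' with ⟨c', i', s', t'⟩ | c'
      · -- both main edges
        have hy1 : ((phi hm hk h2 (Sum.inl (c, i, s, t))).2.1 : ℕ)
            = 2 * ((c : ℕ) * d + (i : ℕ)) + (t : ℕ) := rfl
        have hy2 : ((phi hm hk h2 (Sum.inl (c', i', s', t'))).2.1 : ℕ)
            = 2 * ((c' : ℕ) * d + (i' : ℕ)) + (t' : ℕ) := rfl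
        have hb1 := blk_lt c i
        have hb2 := blk_lt c' i'
        have ht1 := t.2
        have ht2 := t'.2
        simp only [hgm] at hge
        rw [hy1, hy2, if_pos (by omega), if_pos (by omega)] at hge
        have hXX : (c : ℕ) * d + (i : ℕ) = (c' : ℕ) * d + (i' : ℕ) := by omega
        have he1 := (euc_iff (c : ℕ) (i : ℕ) ((c' : ℕ) * d + (i' : ℕ)) i.2).mp hXX
        have he2 := (euc_iff (c' : ℕ) (i' : ℕ) ((c' : ℕ) * d + (i' : ℕ)) i'.2).mp rfl
        have hcc : (c : ℕ) = (c' : ℕ) := by omega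
        have hii : (i : ℕ) = (i' : ℕ) := by omega
        have hcF : c = c' := Fin.ext hcc
        have hiF : i = i' := Fin.ext hii
        subst hcF hiF
        have hsF : s ≠ s' := by
          intro hss
          subst hss
          exact hx rfl
        have htF : t ≠ t' := by
          intro htt
          subst htt
          exact hy rfl
        have hsv : (s : ℕ) ≠ (s' : ℕ) := fun h => hsF (Fin.ext h)
        have htv : (t : ℕ) ≠ (t' : ℕ) := fun h => htF (Fin.ext h)
        have hs1 := s.2
        have hs2 := s'.2
        apply hz
        apply Fin.ext
        show 2 * ((c : ℕ) * d + (i : ℕ)) + ((t : ℕ) + (s : ℕ)) % 2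
          = 2 * ((c : ℕ) * d + (i : ℕ)) + ((t' : ℕ) + (s' : ℕ)) % 2
        omega
      · -- main vs extra: gm values differ
        have hg1 := hval _ (Finset.mem_coe.mp he)
        have hy1 : ((phi hm hk h2 (Sum.inl (c, i, s, t))).2.1 : ℕ)
            = 2 * ((c : ℕ) * d + (i : ℕ)) + (t : ℕ) := rfl
        have hy2 : ((phi hm hk h2 (Sum.inr c')).2.1 : ℕ) = n - 1 := rfl
        have hb1 := blk_lt c i
        have ht1 := t.2
        have hw2 : (n - 2 * (n / 2)) * (2 * k) ≠ 0 := hw'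
        have hz0 : n - 2 * (n / 2) ≠ 0 := fun h0 => hw2 (by rw [h0]; ring)
        have hodd : n - 2 * (n / 2) = 1 := by omega
        simp only [hgm] at hge
        rw [hy1, hy2, if_pos (by omega), if_neg (by omega)] at hge
        omega
      · -- extra vs main
        have hy1 : ((phi hm hk h2 (Sum.inr c)).2.1 : ℕ) = n - 1 := rfl
        have hy2 : ((phi hm hk h2 (Sum.inl (c', i', s', t'))).2.1 : ℕ)
            = 2 * ((c' : ℕ) * d + (i' : ℕ)) + (t' : ℕ) := rfl
        have hb2 := blk_lt c' i'
        have ht2 := t'.2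
        have hw2 : (n - 2 * (n / 2)) * (2 * k) ≠ 0 := hw
        have hz0 : n - 2 * (n / 2) ≠ 0 := fun h0 => hw2 (by rw [h0]; ring)
        have hodd : n - 2 * (n / 2) = 1 := by omega
        simp only [hgm] at hge
        rw [hy1, hy2, if_neg (by omega), if_pos (by omega)] at hge
        omega
      · -- both extra
        apply hy
        apply Fin.ext
        show (n - 1 : ℕ) = (n - 1 : ℕ)
        rfl
    calc M.card = (M.image gm).card := (Finset.card_image_of_injOn hinj).symm
      _ ≤ (Finset.range (n / 2 + (n - 2 * (n / 2)))).card := by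
          apply Finset.card_le_card
          intro x hx
          obtain ⟨e, he, rfl⟩ := Finset.mem_image.mp hx
          rw [Finset.mem_range]
          exact hval e he
      _ = n / 2 + (n - 2 * (n / 2)) := Finset.card_range _
      _ ≤ (n + 1) / 2 := by omega
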